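/- Let d ≥ 2, and let r : (−∞, 0] → (0, ∞) and ω : (−∞, 0] → S^{d−1} be differentiable functions, where S^{d−1} ⊆ ℝ^d is the unit sphere, satisfying r′(τ)² + sinh(r(τ))² · ‖ω′(τ)‖² < 1 for every τ ≤ 0, where ‖·‖ is the Euclidean norm of ℝ^d. Define u(τ) := r(τ) + τ. Then u is strictly increasing on (−∞, 0], and exactly one of the following holds: (i) u(τ) → −∞ as τ → −∞; or (ii) there exist u₀ ∈ ℝ and ω₀ ∈ S^{d−1} such that u(τ) → u₀, r(τ) → +∞, and ω(τ) → ω₀ as τ → −∞. -/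
import Mathlib


open Filter

private lemma sinh_ge_exp_quarter {x : ℝ} (hx : 1 ≤ x) :
    Real.exp x / 4 ≤ Real.sinh x := by
  rw [Real.sinh_eq]
  have h1 : Real.exp (-x) ≤ 1 := Real.exp_le_one_iff.2 (by linarith)
  have h2 : (2:ℝ) ≤ Real.exp x := by
    have := Real.add_one_le_exp 1
    have := Real.exp_le_exp.2 hx
    linarith
  linarith

/-- Let `d ≥ 2` and let `r : (−∞,0] → (0,∞)` and `ω : (−∞,0] → S^{d−1} ⊆ ℝ^d` be
differentiable with `r'(τ)² + sinh(r τ)² ‖ω'(τ)‖² < 1` for all `τ ≤ 0`. Set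
`u(τ) = r(τ) + τ`. Then `u` is strictly increasing on `(−∞,0]` and exactly one of:
(i) `u(τ) → −∞` as `τ → −∞`; (ii) there are `u₀ ∈ ℝ`, `ω₀ ∈ S^{d−1}` with
`u(τ) → u₀`, `r(τ) → +∞` and `ω(τ) → ω₀` as `τ → −∞`. -/
theorem flrw_hyperbolic_tif_dichotomy
    (d : ℕ) (hd : 2 ≤ d)
    (r r' : ℝ → ℝ) (ω ω' : ℝ → EuclideanSpace ℝ (Fin d))
    (hr_pos : ∀ τ ≤ (0:ℝ), 0 < r τ)
    (hω_sph : ∀ τ ≤ (0:ℝ), ‖ω τ‖ = 1)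
    (hr_deriv : ∀ τ ≤ (0:ℝ), HasDerivWithinAt r (r' τ) (Set.Iic (0:ℝ)) τ)
    (hω_deriv : ∀ τ ≤ (0:ℝ), HasDerivWithinAt ω (ω' τ) (Set.Iic (0:ℝ)) τ)
    (htimelike : ∀ τ ≤ (0:ℝ), (r' τ)^2 + (Real.sinh (r τ))^2 * ‖ω' τ‖^2 < 1) :
    StrictMonoOn (fun τ => r τ + τ) (Set.Iic (0:ℝ)) ∧
    Xor'
      (Tendsto (fun τ => r τ + τ) atBot atBot)
      (∃ u₀ : ℝ, ∃ ω₀ : EuclideanSpace ℝ (Fin d), ‖ω₀‖ = 1 ∧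
        Tendsto (fun τ => r τ + τ) atBot (nhds u₀) ∧
        Tendsto r atBot atTop ∧
        Tendsto ω atBot (nhds ω₀)) := by
  set u : ℝ → ℝ := fun τ => r τ + τ with hu_def
  -- the derivative of u is positive
  have hr'gt : ∀ τ ≤ (0:ℝ), -1 < r' τ := by
    intro τ hτ
    have h1 := htimelike τ hτ
    have h2 : (0:ℝ) ≤ (Real.sinh (r τ))^2 * ‖ω' τ‖^2 :=
      mul_nonneg (sq_nonneg _) (sq_nonneg _)
    nlinarith [sq_nonneg (r' τ + 1)]
  have hu_deriv : ∀ τ ≤ (0:ℝ), HasDerivWithinAt u (r' τ + 1) (Set.Iic (0:ℝ)) τ := by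
    intro τ hτ
    exact (hr_deriv τ hτ).add (hasDerivWithinAt_id τ _)
  have hu_cont : ContinuousOn u (Set.Iic (0:ℝ)) :=
    fun x hx => (hu_deriv x hx).continuousWithinAt
  have hmono : StrictMonoOn u (Set.Iic (0:ℝ)) := by
    apply strictMonoOn_of_deriv_pos (convex_Iic 0) hu_cont
    intro x hx
    rw [interior_Iic] at hx
    have hxle : x ≤ 0 := le_of_lt hx
    have hd : HasDerivAt u (r' x + 1) x :=
      (hu_deriv x hxle).hasDerivAt (Iic_mem_nhds hx)
    rw [hd.deriv]
    linarith [hr'gt x hxle]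
  refine ⟨hmono, ?_⟩
  -- monotone extension of u to all of ℝ
  set v : ℝ → ℝ := fun τ => u (min τ 0) with hv_def
  have hvmono : Monotone v := by
    intro a b hab
    rcases eq_or_lt_of_le (min_le_min_right (0:ℝ) hab) with h | h
    · simp [hv_def, h]
    · exact le_of_lt (hmono (Set.mem_Iic.2 (min_le_right a 0))
        (Set.mem_Iic.2 (min_le_right b 0)) h)
  have huv : u =ᶠ[atBot] v := by
    filter_upwards [eventually_le_atBot (0:ℝ)] with τ hτ
    simp [hv_def, min_eq_left hτ]
  by_cases hbdd : BddBelow (Set.range v)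
  · -- bounded below case: u converges
    set u₀ : ℝ := ⨅ τ, v τ with hu₀_def
    have hv_tendsto : Tendsto v atBot (nhds u₀) := tendsto_atBot_ciInf hvmono hbdd
    have hu_tendsto : Tendsto u atBot (nhds u₀) := hv_tendsto.congr' huv.symm
    have hlb : ∀ τ ≤ (0:ℝ), u₀ ≤ u τ := by
      intro τ hτ
      have : u₀ ≤ v τ := ciInf_le hbdd τ
      simpa [hv_def, min_eq_left hτ] using this
    have hr_tendsto : Tendsto r atBot atTop := by
      have hneg : Tendsto (fun τ : ℝ => -τ) atBot atTop := tendsto_neg_atBot_atTop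
      have h := hu_tendsto.add_atTop hneg
      have heq : (fun τ : ℝ => u τ + -τ) = r := by
        funext τ; simp [hu_def]
      rwa [heq] at h
    -- now the convergence of ω
    set T₀ : ℝ := min 0 (u₀ - 1) with hT₀_def
    have hT₀0 : T₀ ≤ 0 := min_le_left _ _
    have hrτ : ∀ τ ≤ T₀, u₀ - τ ≤ r τ := by
      intro τ hτ
      have := hlb τ (hτ.trans hT₀0)
      simp only [hu_def] at this
      linarith
    have h1τ : ∀ τ ≤ T₀, (1:ℝ) ≤ u₀ - τ := by
      intro τ hτ
      have : τ ≤ u₀ - 1 := hτ.trans (min_le_right _ _)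
      linarith
    set g : ℝ → ℝ := fun τ => 4 * Real.exp (τ - u₀) with hg_def
    have hg_pos : ∀ τ, 0 < g τ := fun τ => by positivity
    have hg_mono : Monotone g := by
      intro a b hab
      have := Real.exp_le_exp.2 (sub_le_sub_right hab u₀)
      simp only [hg_def]
      linarith
    have hg_deriv : ∀ x, HasDerivAt g (g x) x := by
      intro x
      have h := (Real.hasDerivAt_exp (x - u₀)).comp x ((hasDerivAt_id x).sub_const u₀)
      simp only [mul_one] at h
      simpa [hg_def] using h.const_mul 4
    have hω'bound : ∀ τ ≤ T₀, ‖ω' τ‖ ≤ g τ := by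
      intro τ hτ
      have hτ0 : τ ≤ 0 := hτ.trans hT₀0
      have h1 : (1:ℝ) ≤ u₀ - τ := h1τ τ hτ
      have hrb : u₀ - τ ≤ r τ := hrτ τ hτ
      have hsinh1 : Real.exp (u₀ - τ) / 4 ≤ Real.sinh (u₀ - τ) := sinh_ge_exp_quarter h1
      have hsinh2 : Real.sinh (u₀ - τ) ≤ Real.sinh (r τ) := Real.sinh_le_sinh.2 hrb
      have hS : 0 < Real.sinh (r τ) := Real.sinh_pos_iff.2 (hr_pos τ hτ0)
      have hsq : (Real.sinh (r τ))^2 * ‖ω' τ‖^2 < 1 := by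
        have := htimelike τ hτ0
        nlinarith [sq_nonneg (r' τ)]
      have hSw : Real.sinh (r τ) * ‖ω' τ‖ ≤ 1 := by
        nlinarith [mul_nonneg hS.le (norm_nonneg (ω' τ))]
      have hE : Real.exp (τ - u₀) = (Real.exp (u₀ - τ))⁻¹ := by
        rw [← Real.exp_neg]; ring_nf
      have hEpos : (0:ℝ) < Real.exp (u₀ - τ) := Real.exp_pos _
      simp only [hg_def, hE]
      rw [show (4:ℝ) * (Real.exp (u₀ - τ))⁻¹ = 4 / Real.exp (u₀ - τ) by ring,
        le_div_iff₀ hEpos]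
      nlinarith [norm_nonneg (ω' τ), mul_le_mul_of_nonneg_left
        (hsinh1.trans hsinh2) (norm_nonneg (ω' τ))]
    -- mean value estimate
    have key : ∀ s t : ℝ, s ≤ t → t ≤ T₀ → ‖ω t - ω s‖ ≤ g t := by
      intro s t hst ht
      have hsub : Set.Icc s t ⊆ Set.Iic (0:ℝ) := fun x hx =>
        Set.mem_Iic.2 (hx.2.trans (ht.trans hT₀0))
      have hf : ContinuousOn (fun x => ω x - ω s) (Set.Icc s t) := by
        apply ContinuousOn.sub _ continuousOn_const
        exact fun x hx => ((hω_deriv x (hsub hx)).continuousWithinAt).mono hsub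
      have hf' : ∀ x ∈ Set.Ico s t, HasDerivWithinAt (fun y => ω y - ω s)
          (ω' x) (Set.Ici x) x := by
        intro x hx
        have hxlt : x < 0 := lt_of_lt_of_le hx.2 (ht.trans hT₀0)
        have hda : HasDerivAt ω (ω' x) x :=
          (hω_deriv x hxlt.le).hasDerivAt (Iic_mem_nhds hxlt)
        exact (hda.sub_const (ω s)).hasDerivWithinAt
      have hB : ∀ x, HasDerivAt (fun y => g y - g s) (g x) x :=
        fun x => (hg_deriv x).sub_const (g s)
      have ha : ‖(fun x => ω x - ω s) s‖ ≤ g s - g s := by simp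
      have bound : ∀ x ∈ Set.Ico s t, ‖ω' x‖ ≤ g x :=
        fun x hx => hω'bound x (hx.2.le.trans ht)
      have := image_norm_le_of_norm_deriv_right_le_deriv_boundary hf hf' ha hB bound
        (Set.right_mem_Icc.2 hst)
      have hgs : 0 < g s := hg_pos s
      simpa using this.trans (by linarith)
    -- Cauchy
    have hcauchy : Cauchy (Filter.map ω atBot) := by
      rw [Metric.cauchy_iff]
      refine ⟨map_neBot, fun ε hε => ?_⟩
      set T : ℝ := min T₀ (u₀ + Real.log (ε / 8)) with hT_def
      have hTT₀ : T ≤ T₀ := min_le_left _ _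
      have hgT : g T < ε := by
        have h1 : T - u₀ ≤ Real.log (ε / 8) := by
          have : T ≤ u₀ + Real.log (ε / 8) := min_le_right _ _
          linarith
        have h2 : Real.exp (T - u₀) ≤ ε / 8 := by
          calc Real.exp (T - u₀) ≤ Real.exp (Real.log (ε / 8)) := Real.exp_le_exp.2 h1
            _ = ε / 8 := Real.exp_log (by linarith)
        simp only [hg_def]
        linarith
      refine ⟨ω '' Set.Iic T, image_mem_map (Iic_mem_atBot T), ?_⟩
      rintro x ⟨a, ha, rfl⟩ y ⟨b, hb, rfl⟩
      simp only [Set.mem_Iic] at ha hb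
      rw [dist_eq_norm]
      rcases le_total a b with hab | hab
      · rw [norm_sub_rev]
        calc ‖ω b - ω a‖ ≤ g b := key a b hab (hb.trans hTT₀)
          _ ≤ g T := hg_mono hb
          _ < ε := hgT
      · calc ‖ω a - ω b‖ ≤ g a := key b a hab (ha.trans hTT₀)
          _ ≤ g T := hg_mono ha
          _ < ε := hgT
    obtain ⟨ω₀, hω₀⟩ := CompleteSpace.complete hcauchy
    have hω_tendsto : Tendsto ω atBot (nhds ω₀) := hω₀
    have hnorm : ‖ω₀‖ = 1 := by
      have h1 : Tendsto (fun τ => ‖ω τ‖) atBot (nhds ‖ω₀‖) := hω_tendsto.norm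
      have h2 : Tendsto (fun τ => ‖ω τ‖) atBot (nhds 1) := by
        apply Tendsto.congr' _ tendsto_const_nhds
        filter_upwards [eventually_le_atBot (0:ℝ)] with τ hτ
        exact (hω_sph τ hτ).symm
      exact tendsto_nhds_unique h1 h2
    exact Or.inr ⟨⟨u₀, ω₀, hnorm, hu_tendsto, hr_tendsto, hω_tendsto⟩,
      fun h => not_tendsto_atBot_of_tendsto_nhds hu_tendsto h⟩
  · -- unbounded case: u → −∞
    have hv : Tendsto v atBot atBot := by
      apply tendsto_atBot_atBot_of_monotone hvmono
      intro b
      obtain ⟨y, ⟨a, rfl⟩, hy⟩ := not_bddBelow_iff.1 hbdd b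
      exact ⟨a, hy.le⟩
    have hu : Tendsto u atBot atBot := hv.congr' huv.symm
    exact Or.inl ⟨hu, fun ⟨u₀, ω₀, _, h, _, _⟩ =>
      not_tendsto_atBot_of_tendsto_nhds h hu⟩
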